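/- Let f ∈ H, let X ⊆ Ω be finite, and set r := f − I_X f. Let β ∈ [0,1] and γ ∈ (0,1], and suppose x⁺ ∈ Ω satisfies the weak selection inequality γ · |r(z)|^β · P_X(z)^{1−β} ≤ |r(x⁺)|^β · P_X(x⁺)^{1−β} for all z ∈ Ω. Then for every x ∈ Ω, |r(x)| ≤ γ^{−1} · |r(x⁺)|^β · P_X(x⁺)^{1−β} · ‖r‖_H^{1−β}; in particular ‖r‖_∞ ≤ γ^{−1} |r(x⁺)|^β P_X(x⁺)^{1−β} ‖r‖_H^{1−β}. -/

import Mathlib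

open scoped RealInnerProductSpace

variable {H : Type*} [NormedAddCommGroup H] [InnerProductSpace ℝ H] {Ω : Type*}

/-- The kernel interpolant `I_X f`: the orthogonal projection of `f` onto
`V(X) = span {Φ(x) : x ∈ X}`. -/
noncomputable def interp (Φ : Ω → H) (X : Finset Ω) (f : H) : H :=
  haveI : FiniteDimensional ℝ (Submodule.span ℝ (Φ '' (X : Set Ω))) :=
    FiniteDimensional.span_of_finite ℝ (X.finite_toSet.image Φ)
  (Submodule.orthogonalProjectionOnto (Submodule.span ℝ (Φ '' (X : Set Ω))) f : H)

/-- The power function `P_X(z) = ‖Φ(z) − Π_{V(X)} Φ(z)‖`. -/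
noncomputable def powerFun (Φ : Ω → H) (X : Finset Ω) (z : Ω) : ℝ :=
  ‖Φ z - interp Φ X (Φ z)‖

/-- The sup norm `‖g‖_∞ = sup_{x ∈ Ω} |g(x)|`, where `g(x) = ⟪g, Φ(x)⟫`. -/
noncomputable def supNorm (Φ : Ω → H) (g : H) : ℝ := ⨆ x : Ω, |⟪g, Φ x⟫|

lemma key (Φ : Ω → H) (X : Finset Ω) (f : H) (x : Ω) :
    |⟪f - interp Φ X f, Φ x⟫| ≤ ‖f - interp Φ X f‖ * powerFun Φ X x := by
  haveI : FiniteDimensional ℝ (Submodule.span ℝ (Φ '' (X : Set Ω))) :=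
    FiniteDimensional.span_of_finite ℝ (X.finite_toSet.image Φ)
  set K := Submodule.span ℝ (Φ '' (X : Set Ω))
  have hmem : f - interp Φ X f ∈ Kᗮ := by
    exact Submodule.sub_starProjection_mem_orthogonal (K := K) f
  have hpx : interp Φ X (Φ x) ∈ K := by
    exact (Submodule.orthogonalProjectionOnto K (Φ x)).2
  have h0 : ⟪f - interp Φ X f, interp Φ X (Φ x)⟫ = 0 := by
    rw [real_inner_comm]
    exact (Submodule.mem_orthogonal K _).mp hmem _ hpx
  have : ⟪f - interp Φ X f, Φ x⟫ = ⟪f - interp Φ X f, Φ x - interp Φ X (Φ x)⟫ := by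
    rw [inner_sub_right, h0, sub_zero]
  rw [this]
  rw [powerFun]
  exact abs_real_inner_le_norm _ _

theorem statement_2 [Nonempty Ω]
    (Φ : Ω → H) (hΦ : ∀ z : Ω, ‖Φ z‖ ≤ 1)
    (f : H) (X : Finset Ω) (β γ : ℝ)
    (hβ0 : 0 ≤ β) (hβ1 : β ≤ 1) (hγ0 : 0 < γ) (hγ1 : γ ≤ 1) (xp : Ω)
    (hsel : ∀ z : Ω,
      γ * |⟪f - interp Φ X f, Φ z⟫| ^ β * powerFun Φ X z ^ (1 - β)
        ≤ |⟪f - interp Φ X f, Φ xp⟫| ^ β * powerFun Φ X xp ^ (1 - β)) :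
    (∀ x : Ω, |⟪f - interp Φ X f, Φ x⟫|
        ≤ γ⁻¹ * |⟪f - interp Φ X f, Φ xp⟫| ^ β * powerFun Φ X xp ^ (1 - β)
            * ‖f - interp Φ X f‖ ^ (1 - β))
    ∧ supNorm Φ (f - interp Φ X f)
        ≤ γ⁻¹ * |⟪f - interp Φ X f, Φ xp⟫| ^ β * powerFun Φ X xp ^ (1 - β)
            * ‖f - interp Φ X f‖ ^ (1 - β) := by
  set r := f - interp Φ X f with hr
  have h1β : (0:ℝ) ≤ 1 - β := by linarith
  have hBnn : 0 ≤ γ⁻¹ * |⟪r, Φ xp⟫| ^ β * powerFun Φ X xp ^ (1 - β) * ‖r‖ ^ (1 - β) := by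
    have hp : 0 ≤ powerFun Φ X xp := norm_nonneg _
    have := hγ0
    positivity
  have main : ∀ x : Ω, |⟪r, Φ x⟫|
      ≤ γ⁻¹ * |⟪r, Φ xp⟫| ^ β * powerFun Φ X xp ^ (1 - β) * ‖r‖ ^ (1 - β) := by
    intro x
    rcases eq_or_lt_of_le (abs_nonneg ⟪r, Φ x⟫) with h0 | hpos
    · rw [← h0]; exact hBnn
    · have hkey := key Φ X f x
      have hPnn : 0 ≤ powerFun Φ X x := norm_nonneg _
      have step : |⟪r, Φ x⟫| ^ β * powerFun Φ X x ^ (1 - β)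
          ≤ γ⁻¹ * (|⟪r, Φ xp⟫| ^ β * powerFun Φ X xp ^ (1 - β)) := by
        rw [le_inv_mul_iff₀ hγ0, ← mul_assoc]
        exact hsel x
      calc |⟪r, Φ x⟫| = |⟪r, Φ x⟫| ^ β * |⟪r, Φ x⟫| ^ (1 - β) := by
            rw [← Real.rpow_add hpos]; simp
        _ ≤ |⟪r, Φ x⟫| ^ β * (‖r‖ * powerFun Φ X x) ^ (1 - β) :=
            mul_le_mul_of_nonneg_left (Real.rpow_le_rpow (abs_nonneg _) hkey h1β)
              (Real.rpow_nonneg (abs_nonneg _) _)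
        _ = |⟪r, Φ x⟫| ^ β * powerFun Φ X x ^ (1 - β) * ‖r‖ ^ (1 - β) := by
            rw [Real.mul_rpow (norm_nonneg _) hPnn]; ring
        _ ≤ γ⁻¹ * (|⟪r, Φ xp⟫| ^ β * powerFun Φ X xp ^ (1 - β)) * ‖r‖ ^ (1 - β) :=
            mul_le_mul_of_nonneg_right step (Real.rpow_nonneg (norm_nonneg _) _)
        _ = γ⁻¹ * |⟪r, Φ xp⟫| ^ β * powerFun Φ X xp ^ (1 - β) * ‖r‖ ^ (1 - β) := by ring
  exact ⟨main, ciSup_le main⟩
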